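/- arXiv:1203.2939 — 2 statements merged into one kernel-verified Lean document; each statement's English description precedes it below -/
import Mathlib

section
/- Let i ≥ 1. The invariant S_i is a degree one Vassiliev invariant: for every Gauss diagram G and every pair of distinct chords a, b of G, Σ_{(ε_1,ε_2) ∈ {±1}^2} ε_1 ε_2 · S_i(G_{((ε_1,ε_2),(a,b))}) = 0 in the free ℤ-module on flat equivalence classes of flat Gauss diagrams, where G_{((ε_1,ε_2),(a,b))} is obtained from G by flipping (interchanging head and foot and negating the sign of) a if ε_1 = −1 and flipping b if ε_2 = −1. -/
/-! ## Gauss diagrams and parity -/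

/-- `arc a b p` : position `p` lies strictly inside the arc traversed in the positive
direction from `a` to `b` on a circle whose positions are numbered `0, 1, 2, …`
in the positive direction. -/
def arc (a b p : ℕ) : Bool :=
  if a < b then decide (a < p ∧ p < b) else decide (p < b ∨ a < p)

/-- A Gauss diagram: `n` signed oriented chords whose `2n` endpoints are placed on the
`2n` points of an oriented circle.  Chord `i` has its head (arrowhead) at position
`head i`, its foot at position `foot i`, and sign `sign i`. -/
structure GaussDiagram where
  n : ℕ
  head : Fin n → Fin (2 * n)
  foot : Fin n → Fin (2 * n)
  sign : Fin n → ℤ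

namespace GaussDiagram

/-- A genuine Gauss diagram: all `2n` endpoints are distinct (hence they exhaust the
`2n` circle positions) and every sign is `±1`. -/
def Proper (G : GaussDiagram) : Prop :=
  Function.Injective (Sum.elim G.head G.foot) ∧ ∀ i, G.sign i = 1 ∨ G.sign i = -1

/-- `G.crosses c x` : chord `x` intersects chord `c` (their endpoint pairs interleave
in the cyclic order), i.e. `x ∈ N_c`. -/
def crosses (G : GaussDiagram) (c x : Fin G.n) : Bool :=
  x != c &&
    (arc (G.head c).1 (G.foot c).1 (G.head x).1 != arc (G.head c).1 (G.foot c).1 (G.foot x).1)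

/-- The intersection number `int_c(x)`: `+1` if the head of `x` lies on the arc traversed
in the positive direction from the head of `c` to the foot of `c`, and `-1` otherwise. -/
def inter (G : GaussDiagram) (c x : Fin G.n) : ℤ :=
  if arc (G.head c).1 (G.foot c).1 (G.head x).1 then 1 else -1

/-- The parity of a chord: `p(c) = ∑_{x ∈ N_c} sgn(x) · int_c(x)`. -/
def parity (G : GaussDiagram) (c : Fin G.n) : ℤ :=
  ∑ x : Fin G.n, if G.crosses c x then G.sign x * G.inter c x else 0

end GaussDiagram

/-- The cyclic successor of a circle position. -/
def psucc {m : ℕ} (v : Fin m) : Fin m := ⟨(v.1 + 1) % m, Nat.mod_lt _ v.pos⟩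

/-- Two circle positions are adjacent. -/
def adjPos {m : ℕ} (u v : Fin m) : Prop := v = psucc u ∨ u = psucc v

/-- A map of circle positions preserving the cyclic order (in particular injective). -/
def CyclicMap {k l : ℕ} (φ : Fin k → Fin l) : Prop :=
  ∀ a b p : Fin k, arc a.1 b.1 p.1 = arc (φ a).1 (φ b).1 (φ p).1

/-- A map of circle positions reversing the cyclic order. -/
def AntiCyclicMap {k l : ℕ} (φ : Fin k → Fin l) : Prop :=
  ∀ a b p : Fin k, arc a.1 b.1 p.1 = arc (φ b).1 (φ a).1 (φ p).1

/-! ## The chord moves -/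

/-- The single chord move: `G'` is obtained from `G` by inserting one chord `y` whose two
endpoints occupy adjacent positions on the circle; all old chords keep their mutual cyclic
position (via the cyclic-order preserving map `φ`), their orientation and their sign. -/
def SingleChordMove (G G' : GaussDiagram) : Prop :=
  G.Proper ∧ G'.Proper ∧ G'.n = G.n + 1 ∧
  ∃ (e : Fin G.n → Fin G'.n) (φ : Fin (2 * G.n) → Fin (2 * G'.n)) (y : Fin G'.n),
    Function.Injective e ∧ (∀ i, e i ≠ y) ∧ CyclicMap φ ∧
    (∀ i, G'.head (e i) = φ (G.head i) ∧ G'.foot (e i) = φ (G.foot i) ∧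
      G'.sign (e i) = G.sign i) ∧
    adjPos (G'.head y) (G'.foot y)

/-- The two chord move: `G'` is obtained from `G` by inserting a pair of oppositely signed
chords `y₁, y₂` whose heads occupy adjacent positions and whose feet occupy adjacent
positions on the circle. -/
def TwoChordMove (G G' : GaussDiagram) : Prop :=
  G.Proper ∧ G'.Proper ∧ G'.n = G.n + 2 ∧
  ∃ (e : Fin G.n → Fin G'.n) (φ : Fin (2 * G.n) → Fin (2 * G'.n)) (y₁ y₂ : Fin G'.n),
    Function.Injective e ∧ y₁ ≠ y₂ ∧ (∀ i, e i ≠ y₁ ∧ e i ≠ y₂) ∧ CyclicMap φ ∧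
    (∀ i, G'.head (e i) = φ (G.head i) ∧ G'.foot (e i) = φ (G.foot i) ∧
      G'.sign (e i) = G.sign i) ∧
    adjPos (G'.head y₁) (G'.head y₂) ∧ adjPos (G'.foot y₁) (G'.foot y₂) ∧
    G'.sign y₁ = -G'.sign y₂

/-- The triangle (vertex) structure of three chords `x y z` of `G`: their six endpoints
form three pairs of adjacent circle positions (the vertices of a triangle), namely
`{w₁, w₁+1}` (two heads), `{w₂, w₂+1}` (two feet) and `{w₃, w₃+1}` (a head and a foot).
Chord `x` runs from the head–head vertex to the foot–foot vertex. -/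
def TriangleVertices (G : GaussDiagram) (x y z : Fin G.n) (w₁ w₂ w₃ : Fin (2 * G.n)) : Prop :=
  x ≠ y ∧ y ≠ z ∧ x ≠ z ∧
  ((G.head x = w₁ ∧ G.head y = psucc w₁) ∨ (G.head x = psucc w₁ ∧ G.head y = w₁)) ∧
  ((G.foot x = w₂ ∧ G.foot z = psucc w₂) ∨ (G.foot x = psucc w₂ ∧ G.foot z = w₂)) ∧
  ((G.foot y = w₃ ∧ G.head z = psucc w₃) ∨ (G.foot y = psucc w₃ ∧ G.head z = w₃))

/-- The admissible sign configurations for a triangle move on the chords `x y z`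
(`x` being the chord joining the head–head vertex to the foot–foot vertex):
these are the configurations exhibited in the paper together with their modifications
obtained by simultaneously reversing the sign and orientation of the two chords meeting
at the head–head vertex or at the foot–foot vertex.
In the (3,0) case the two chords `y, z` carry one sign and `x` the opposite sign; in the
(2,1) case the signs are governed by the pair of chords crossing on the one-intersection
side of the move. -/
def AdmissibleSigns (G G' : GaussDiagram) (x y z : Fin G.n) (x' y' z' : Fin G'.n) : Prop :=
  -- (3,0) triangle move
  (((G.crosses x y = false ∧ G.crosses y z = false ∧ G.crosses x z = false) ∨
    (G'.crosses x' y' = false ∧ G'.crosses y' z' = false ∧ G'.crosses x' z' = false)) ∧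
    G.sign y = G.sign z ∧ G.sign x = -G.sign y) ∨
  -- (2,1) triangle move, the single intersection being between x and y
  (((G.crosses x y = true ∧ G.crosses y z = false ∧ G.crosses x z = false) ∨
    (G'.crosses x' y' = true ∧ G'.crosses y' z' = false ∧ G'.crosses x' z' = false)) ∧
    G.sign y = -G.sign x ∧ G.sign z = G.sign x) ∨
  -- (2,1) triangle move, the single intersection being between x and z
  (((G.crosses x z = true ∧ G.crosses x y = false ∧ G.crosses y z = false) ∨
    (G'.crosses x' z' = true ∧ G'.crosses x' y' = false ∧ G'.crosses y' z' = false)) ∧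
    G.sign z = -G.sign x ∧ G.sign y = G.sign x) ∨
  -- (2,1) triangle move, the single intersection being between y and z
  (((G.crosses y z = true ∧ G.crosses x y = false ∧ G.crosses x z = false) ∨
    (G'.crosses y' z' = true ∧ G'.crosses x' y' = false ∧ G'.crosses x' z' = false)) ∧
    G.sign y = G.sign x ∧ G.sign z = G.sign x)

/-- The triangle move: three chords `x y z` of `G` forming a triangle with three
adjacent-position vertices (one head–head, one foot–foot, one mixed), in an admissible
sign/orientation configuration, slide past each other: in `G'` each pair of adjacent
endpoints has been interchanged, while everything else is unchanged. -/
def TriangleMove (G G' : GaussDiagram) : Prop :=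
  G.Proper ∧ G'.Proper ∧
  ∃ (e : Fin G.n → Fin G'.n) (φ : Fin (2 * G.n) → Fin (2 * G'.n))
    (x y z : Fin G.n) (w₁ w₂ w₃ : Fin (2 * G.n)),
    Function.Bijective e ∧ Function.Bijective φ ∧ CyclicMap φ ∧
    TriangleVertices G x y z w₁ w₂ w₃ ∧
    (∀ i, G'.sign (e i) = G.sign i) ∧
    (∀ i, i ≠ x → i ≠ y → i ≠ z →
      G'.head (e i) = φ (G.head i) ∧ G'.foot (e i) = φ (G.foot i)) ∧
    -- sliding: each of the six endpoints is exchanged with its partner in its vertex pair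
    ((G'.head (e x) = φ (G.head y) ∧ G'.head (e y) = φ (G.head x)) ∧
     (G'.foot (e x) = φ (G.foot z) ∧ G'.foot (e z) = φ (G.foot x)) ∧
     (G'.foot (e y) = φ (G.head z) ∧ G'.head (e z) = φ (G.foot y))) ∧
    AdmissibleSigns G G' x y z (e x) (e y) (e z)

/-- One chord move (in either direction) between Gauss diagrams. -/
def GaussMove (G G' : GaussDiagram) : Prop :=
  SingleChordMove G G' ∨ SingleChordMove G' G ∨
  TwoChordMove G G' ∨ TwoChordMove G' G ∨
  TriangleMove G G' ∨ TriangleMove G' G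

/-! ## Invariants from parity -/

namespace GaussDiagram

/-- `|A_i(G)|`: the signed cardinality of the set of chords of parity `i`. -/
def cardA (G : GaussDiagram) (i : ℤ) : ℤ :=
  ∑ c : Fin G.n, if G.parity c = i then G.sign c else 0

/-- `|A_Z(G)|`: the signed cardinality of the set of tuples of chords with parities
prescribed by `Z`. -/
def cardATuple (G : GaussDiagram) {k : ℕ} (Z : Fin k → ℤ) : ℤ :=
  ∑ t : Fin k → Fin G.n,
    if ∀ j, G.parity (t j) = Z j then ∏ j, G.sign (t j) else 0

/-- `|V_i(G)|`: the signed cardinality of the set of chords whose parity has absolute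
value `i`. -/
def cardV (G : GaussDiagram) (i : ℤ) : ℤ :=
  ∑ c : Fin G.n, if |G.parity c| = i then G.sign c else 0

/-- `|V_Z(G)|`: the signed cardinality of the set of tuples of chords whose parities have
absolute values prescribed by `Z`. -/
def cardVTuple (G : GaussDiagram) {k : ℕ} (Z : Fin k → ℤ) : ℤ :=
  ∑ t : Fin k → Fin G.n,
    if ∀ j, |G.parity (t j)| = Z j then ∏ j, G.sign (t j) else 0

/-- Flip (reverse the orientation of and negate the sign of) every chord in `S`;
this corresponds to crossing changes in the corresponding virtual knot diagram. -/
def flipSet (G : GaussDiagram) (S : Finset (Fin G.n)) : GaussDiagram where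
  n := G.n
  head := fun i => if i ∈ S then G.foot i else G.head i
  foot := fun i => if i ∈ S then G.head i else G.foot i
  sign := fun i => if i ∈ S then -G.sign i else G.sign i

end GaussDiagram

/-! ## Smoothing and flat diagrams -/

/-- The chord of the smaller diagram indexed by `i` corresponds to the chord `skipAt x i`
of the original diagram (skipping the smoothed chord `x`). -/
def skipAt {n : ℕ} (x : Fin n) (i : Fin (n - 1)) : Fin n :=
  if h : i.1 < x.1 then ⟨i.1, lt_trans h x.2⟩ else ⟨i.1 + 1, by have := i.2; omega⟩

/-- Relabelling of the circle positions after vertically smoothing the chord with head at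
position `h` and foot at position `f` (on a circle with `m` positions): the two positions
`h` and `f` are deleted and the arc strictly between `h` and `f` is reversed. -/
def smoothPos (m h f p : ℕ) : ℕ :=
  let d := (f + m - (h + 1)) % m
  let r := (p + m - (h + 1)) % m
  if r < d then d - 1 - r else r - 1

/-- Vertical smoothing of the chord `x` of a Gauss diagram: the chord `x` is deleted and
the cyclic order of the arc of endpoints lying strictly between the two endpoints of `x`
is reversed. -/
def GaussDiagram.smooth (G : GaussDiagram) (x : Fin G.n) : GaussDiagram where
  n := G.n - 1
  head := fun i =>
    ⟨smoothPos (2 * G.n) (G.head x).1 (G.foot x).1 (G.head (skipAt x i)).1 % (2 * (G.n - 1)),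
      Nat.mod_lt _ (by have := i.2; omega)⟩
  foot := fun i =>
    ⟨smoothPos (2 * G.n) (G.head x).1 (G.foot x).1 (G.foot (skipAt x i)).1 % (2 * (G.n - 1)),
      Nat.mod_lt _ (by have := i.2; omega)⟩
  sign := fun i => G.sign (skipAt x i)

/-- The index of chord `i ≠ x` in the diagram obtained by smoothing the chord `x`. -/
def unskip? {n : ℕ} (x i : Fin n) : Option (Fin (n - 1)) :=
  if h : i.1 < x.1 then some ⟨i.1, by have := x.2; omega⟩
  else if h' : x.1 < i.1 then some ⟨i.1 - 1, by have := i.2; omega⟩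
  else none

/-- Smoothing a list of chords, one after the other. -/
def GaussDiagram.smoothList : (G : GaussDiagram) → List (Fin G.n) → GaussDiagram
  | G, [] => G
  | G, x :: xs => (G.smooth x).smoothList (xs.filterMap (unskip? x))
termination_by G l => l.length
decreasing_by simpa using Nat.lt_succ_of_le (List.length_filterMap_le _ _)

/-- A flat Gauss diagram: a chord diagram on the circle with no signs and no head/foot
designations. -/
structure FlatDiagram where
  n : ℕ
  fst : Fin n → Fin (2 * n)
  snd : Fin n → Fin (2 * n)

namespace FlatDiagram

/-- A genuine flat diagram: the `2n` endpoints are distinct. -/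
def Proper (F : FlatDiagram) : Prop := Function.Injective (Sum.elim F.fst F.snd)

/-- The (unordered) endpoints of the chord `y` are `u` and `v`. -/
def hasEnds (F : FlatDiagram) (y : Fin F.n) (u v : Fin (2 * F.n)) : Prop :=
  (F.fst y = u ∧ F.snd y = v) ∨ (F.fst y = v ∧ F.snd y = u)

end FlatDiagram

/-- Forgetting all signs and head/foot designations of a Gauss diagram. -/
def GaussDiagram.flatten (G : GaussDiagram) : FlatDiagram := ⟨G.n, G.head, G.foot⟩

/-- Isomorphism of flat diagrams: a bijection of chords induced by a bijection of the
circle preserving (or reversing) the cyclic order. -/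
def FlatIso (F F' : FlatDiagram) : Prop :=
  ∃ (e : Fin F.n → Fin F'.n) (φ : Fin (2 * F.n) → Fin (2 * F'.n)),
    Function.Bijective e ∧ Function.Bijective φ ∧ (CyclicMap φ ∨ AntiCyclicMap φ) ∧
    ∀ i, F'.hasEnds (e i) (φ (F.fst i)) (φ (F.snd i))

/-- Flat single chord move: insertion of a chord with adjacent endpoints. -/
def FlatSingleMove (F F' : FlatDiagram) : Prop :=
  F.Proper ∧ F'.Proper ∧ F'.n = F.n + 1 ∧
  ∃ (e : Fin F.n → Fin F'.n) (φ : Fin (2 * F.n) → Fin (2 * F'.n)) (y : Fin F'.n),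
    Function.Injective e ∧ (∀ i, e i ≠ y) ∧ CyclicMap φ ∧
    (∀ i, F'.hasEnds (e i) (φ (F.fst i)) (φ (F.snd i))) ∧
    adjPos (F'.fst y) (F'.snd y)

/-- Flat two chord move: insertion of a parallel pair of chords with pairwise adjacent
endpoints. -/
def FlatTwoMove (F F' : FlatDiagram) : Prop :=
  F.Proper ∧ F'.Proper ∧ F'.n = F.n + 2 ∧
  ∃ (e : Fin F.n → Fin F'.n) (φ : Fin (2 * F.n) → Fin (2 * F'.n)) (y₁ y₂ : Fin F'.n)
    (p q : Fin (2 * F'.n)),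
    Function.Injective e ∧ y₁ ≠ y₂ ∧ (∀ i, e i ≠ y₁ ∧ e i ≠ y₂) ∧ CyclicMap φ ∧
    (∀ i, F'.hasEnds (e i) (φ (F.fst i)) (φ (F.snd i))) ∧
    F'.hasEnds y₁ p q ∧ F'.hasEnds y₂ (psucc p) (psucc q)

/-- Flat triangle move: three chords whose six endpoints form three adjacent-position
vertex pairs slide past each other (no sign or orientation conditions). -/
def FlatTriangleMove (F F' : FlatDiagram) : Prop :=
  F.Proper ∧ F'.Proper ∧
  ∃ (e : Fin F.n → Fin F'.n) (φ : Fin (2 * F.n) → Fin (2 * F'.n))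
    (x y z : Fin F.n) (w₁ w₂ w₃ α₁ β₁ α₂ β₂ α₃ β₃ : Fin (2 * F.n)),
    Function.Bijective e ∧ Function.Bijective φ ∧ CyclicMap φ ∧
    x ≠ y ∧ y ≠ z ∧ x ≠ z ∧
    ((α₁ = w₁ ∧ β₁ = psucc w₁) ∨ (α₁ = psucc w₁ ∧ β₁ = w₁)) ∧
    ((α₂ = w₂ ∧ β₂ = psucc w₂) ∨ (α₂ = psucc w₂ ∧ β₂ = w₂)) ∧
    ((α₃ = w₃ ∧ β₃ = psucc w₃) ∨ (α₃ = psucc w₃ ∧ β₃ = w₃)) ∧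
    F.hasEnds x α₁ α₂ ∧ F.hasEnds y β₁ α₃ ∧ F.hasEnds z β₂ β₃ ∧
    F'.hasEnds (e x) (φ β₁) (φ β₂) ∧ F'.hasEnds (e y) (φ α₁) (φ β₃) ∧
    F'.hasEnds (e z) (φ α₂) (φ α₃) ∧
    (∀ i, i ≠ x → i ≠ y → i ≠ z → F'.hasEnds (e i) (φ (F.fst i)) (φ (F.snd i)))

/-- Generating relation for flat equivalence of flat diagrams. -/
def FlatRel (F F' : FlatDiagram) : Prop :=
  FlatIso F F' ∨ FlatSingleMove F F' ∨ FlatSingleMove F' F ∨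
  FlatTwoMove F F' ∨ FlatTwoMove F' F ∨ FlatTriangleMove F F' ∨ FlatTriangleMove F' F

/-- Flat equivalence classes of flat Gauss diagrams. -/
def FlatClass : Type := Quot FlatRel

/-- The flat equivalence class of a flat diagram. -/
def Fclass (F : FlatDiagram) : FlatClass := Quot.mk _ F

/-! ## The invariants `S_i` and `S_Z` -/

/-- `S_i(G) = ∑_{x ∈ V_i(G)} sgn(x) · F(G^x)`, an element of the free ℤ-module on flat
equivalence classes of flat Gauss diagrams. -/
noncomputable def Sone (G : GaussDiagram) (i : ℤ) : FlatClass →₀ ℤ :=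
  ∑ x : Fin G.n,
    if |G.parity x| = i then
      Finsupp.single (Fclass (G.smooth x).flatten) (G.sign x)
    else 0

/-- `S_Z(G) = ∑_{x̄ ∈ V_Z(G)} sgn(x₁)⋯sgn(x_n) · F(G^{x̄})`, an element of the free
ℤ-module on flat equivalence classes of flat Gauss diagrams. -/
noncomputable def SZ (G : GaussDiagram) {k : ℕ} (Z : Fin k → ℤ) : FlatClass →₀ ℤ :=
  ∑ t : Fin k → Fin G.n,
    if ∀ j, |G.parity (t j)| = Z j then
      Finsupp.single (Fclass (G.smoothList (List.ofFn t)).flatten) (∏ j, G.sign (t j))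
    else 0


/-! ## Auxiliary lemmas -/

lemma arc_swap {h f p : ℕ} (hf : h ≠ f) (ph : p ≠ h) (pf : p ≠ f) :
    arc f h p = !arc h f p := by
  simp only [arc]
  split <;> split <;> rw [← decide_not, decide_eq_decide] <;> omega

lemma arc_rev {m a b p : ℕ} (ha : a < m) (hb : b < m) (hp : p < m) :
    arc a b p = arc (m - 1 - b) (m - 1 - a) (m - 1 - p) := by
  simp only [arc]
  split <;> split <;> rw [decide_eq_decide] <;> omega

lemma mod_two_mul {a m : ℕ} (h : a < 2 * m) : a % m = if m ≤ a then a - m else a := by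
  rcases le_or_gt m a with hma | hma
  · rw [if_pos hma, Nat.mod_eq_sub_mod hma, Nat.mod_eq_of_lt (by omega)]
  · rw [if_neg (by omega)]; exact Nat.mod_eq_of_lt hma

lemma smoothPos_lt {m h f p : ℕ} (hm : h < m) (fm : f < m) (pm : p < m)
    (hf : h ≠ f) (ph : p ≠ h) (pf : p ≠ f) : smoothPos m h f p < m - 2 := by
  have e1 := mod_two_mul (m := m) (a := f + m - (h + 1)) (by omega)
  have e2 := mod_two_mul (m := m) (a := p + m - (h + 1)) (by omega)
  simp only [smoothPos]
  rw [e1, e2]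
  clear e1 e2
  split_ifs <;> omega

lemma abstract_rev {m d r d' r' : ℕ} (hd : d < m - 1) (hr : r < m - 1) (hd' : d' < m - 1)
    (hr' : r' < m - 1) (hdd : d + d' = m - 2) (hrd : r ≠ d)
    (h1 : r < d → r' = r + d' + 1) (h2 : d < r → r' = r - d - 1) :
    (if r' < d' then d' - 1 - r' else r' - 1) = m - 3 - (if r < d then d - 1 - r else r - 1) := by
  split_ifs <;> omega

lemma smoothPos_rev {m h f p : ℕ} (hm : h < m) (fm : f < m) (pm : p < m)
    (hf : h ≠ f) (ph : p ≠ h) (pf : p ≠ f) :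
    smoothPos m f h p = m - 3 - smoothPos m h f p := by
  have e1 := mod_two_mul (m := m) (a := f + m - (h + 1)) (by omega)
  have e2 := mod_two_mul (m := m) (a := p + m - (h + 1)) (by omega)
  have e3 := mod_two_mul (m := m) (a := h + m - (f + 1)) (by omega)
  have e4 := mod_two_mul (m := m) (a := p + m - (f + 1)) (by omega)
  simp only [smoothPos]
  apply abstract_rev (m := m)
  · rw [e1]; split_ifs <;> omega
  · rw [e2]; split_ifs <;> omega
  · rw [e3]; split_ifs <;> omega
  · rw [e4]; split_ifs <;> omega
  · rw [e1, e3]; split_ifs <;> omega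
  · rw [e2, e1]; split_ifs <;> omega
  · intro hlt; rw [e2, e1] at hlt; rw [e4, e2]; split_ifs at * <;> omega
  · intro hlt; rw [e2, e1] at hlt; rw [e4, e2]; split_ifs at * <;> omega

namespace GaussDiagram
variable {G : GaussDiagram}

lemma Proper.head_ne_foot (hG : G.Proper) (i j : Fin G.n) : (G.head i).1 ≠ (G.foot j).1 := by
  intro h
  have h2 : Sum.elim G.head G.foot (Sum.inl i) = Sum.elim G.head G.foot (Sum.inr j) := by
    simpa using Fin.val_injective h
  simpa using hG.1 h2

lemma Proper.head_inj (hG : G.Proper) {i j : Fin G.n}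
    (h : (G.head i).1 = (G.head j).1) : i = j := by
  have h2 : Sum.elim G.head G.foot (Sum.inl i) = Sum.elim G.head G.foot (Sum.inl j) := by
    simpa using Fin.val_injective h
  simpa using hG.1 h2

lemma Proper.foot_inj (hG : G.Proper) {i j : Fin G.n}
    (h : (G.foot i).1 = (G.foot j).1) : i = j := by
  have h2 : Sum.elim G.head G.foot (Sum.inr i) = Sum.elim G.head G.foot (Sum.inr j) := by
    simpa using Fin.val_injective h
  simpa using hG.1 h2

end GaussDiagram

lemma skipAt_ne {n : ℕ} (x : Fin n) (i : Fin (n - 1)) : skipAt x i ≠ x := by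
  unfold skipAt
  split <;> (intro h; apply_fun Fin.val at h; simp at h; omega)

/-- All pairwise val-distinctness facts for endpoints of two distinct chords. -/
lemma parity_flipSet {G : GaussDiagram} (hG : G.Proper) (S : Finset (Fin G.n)) (c : Fin G.n) :
    (G.flipSet S).parity c = (if c ∈ S then -1 else 1) * G.parity c := by
  unfold GaussDiagram.parity
  dsimp only [GaussDiagram.flipSet]
  rw [Finset.mul_sum]
  refine Finset.sum_congr rfl fun (x : Fin G.n) _ => ?_
  by_cases hxc : x = c
  · subst hxc
    simp [GaussDiagram.crosses, bne_self_eq_false (α := Fin (G.flipSet S).n) x]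
  · have hxc' : (x != c) = true := by simpa using hxc
    have hxc'' : (@bne (Fin (G.flipSet S).n) _ x c) = true := bne_iff_ne.mpr hxc
    -- distinctness
    have d1 : (G.head x).1 ≠ (G.head c).1 := fun h => hxc (hG.head_inj h)
    have d2 : (G.head x).1 ≠ (G.foot c).1 := hG.head_ne_foot x c
    have d3 : (G.foot x).1 ≠ (G.head c).1 := fun h => (hG.head_ne_foot c x) h.symm
    have d4 : (G.foot x).1 ≠ (G.foot c).1 := fun h => hxc (hG.foot_inj h)
    have d5 : (G.head c).1 ≠ (G.foot c).1 := hG.head_ne_foot c c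
    by_cases hcS : c ∈ S <;> by_cases hxS : x ∈ S <;>
      simp only [GaussDiagram.crosses, GaussDiagram.inter, GaussDiagram.flipSet,
        if_pos, if_neg, hcS, hxS, if_true, if_false, ite_true, ite_false, hxc', hxc'',
        Bool.true_and] <;>
      [skip; skip; skip; skip]
    · -- c ∈ S, x ∈ S
      rw [arc_swap d5 d3 d4, arc_swap d5 d1 d2]
      cases hA : arc (G.head c).1 (G.foot c).1 (G.head x).1 <;>
        cases hB : arc (G.head c).1 (G.foot c).1 (G.foot x).1 <;> simp <;> ring
    · -- c ∈ S, x ∉ S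
      rw [arc_swap d5 d1 d2, arc_swap d5 d3 d4]
      cases hA : arc (G.head c).1 (G.foot c).1 (G.head x).1 <;>
        cases hB : arc (G.head c).1 (G.foot c).1 (G.foot x).1 <;> simp <;> ring
    · -- c ∉ S, x ∈ S
      cases hA : arc (G.head c).1 (G.foot c).1 (G.head x).1 <;>
        cases hB : arc (G.head c).1 (G.foot c).1 (G.foot x).1 <;> simp [hA, hB] <;> ring
    · -- c ∉ S, x ∉ S
      rw [one_mul]

lemma flat_flip {G : GaussDiagram} (hG : G.Proper) (S : Finset (Fin G.n)) (x : Fin G.n) :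
    Fclass ((G.flipSet S).smooth x).flatten = Fclass (G.smooth x).flatten := by
  apply Quot.sound
  left
  by_cases hxS : x ∈ S
  · -- smoothing the flipped chord: orientation-reversing map
    refine ⟨fun j => j,
      fun q => ⟨2 * (G.n - 1) - 1 - q.1, by
        show 2 * (G.n - 1) - 1 - q.1 < 2 * (G.n - 1)
        have hq : q.1 < 2 * (G.n - 1) := q.2; omega⟩,
      Function.bijective_id, ?_, ?_, ?_⟩
    · have : Function.Involutive
          (fun q : Fin (2 * (G.n - 1)) => (⟨2 * (G.n - 1) - 1 - q.1,
            by have hq : q.1 < 2 * (G.n - 1) := q.2; omega⟩ :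
            Fin (2 * (G.n - 1)))) := by
        intro q; apply Fin.ext; have := q.2; simp; omega
      exact this.bijective
    · right
      intro a b p
      exact arc_rev a.2 b.2 p.2
    · intro j
      have hj : j.1 < G.n - 1 := j.2
      have hn : 2 ≤ G.n := by omega
      have hk : skipAt x j ≠ x := skipAt_ne x j
      have d5 : (G.head x).1 ≠ (G.foot x).1 := hG.head_ne_foot x x
      have key : ∀ p : Fin (2 * G.n), p.1 ≠ (G.head x).1 → p.1 ≠ (G.foot x).1 →
          2 * (G.n - 1) - 1 -
              smoothPos (2 * G.n) (G.foot x).1 (G.head x).1 p.1 % (2 * (G.n - 1))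
            = smoothPos (2 * G.n) (G.head x).1 (G.foot x).1 p.1 % (2 * (G.n - 1)) := by
        intro p hph hpf
        have b1 : (G.head x).1 < 2 * G.n := (G.head x).2
        have b2 : (G.foot x).1 < 2 * G.n := (G.foot x).2
        have b3 : p.1 < 2 * G.n := p.2
        have l1 := smoothPos_lt b1 b2 b3 d5 hph hpf
        have l2 := smoothPos_lt b2 b1 b3 d5.symm hpf hph
        have r := smoothPos_rev b1 b2 b3 d5 hph hpf
        rw [Nat.mod_eq_of_lt (by omega), Nat.mod_eq_of_lt (by omega)]
        omega
      have dh1 : (G.head (skipAt x j)).1 ≠ (G.head x).1 := fun h => hk (hG.head_inj h)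
      have dh2 : (G.head (skipAt x j)).1 ≠ (G.foot x).1 := hG.head_ne_foot _ x
      have df1 : (G.foot (skipAt x j)).1 ≠ (G.head x).1 :=
        fun h => (hG.head_ne_foot x _) h.symm
      have df2 : (G.foot (skipAt x j)).1 ≠ (G.foot x).1 := fun h => hk (hG.foot_inj h)
      by_cases hkS : skipAt x j ∈ S
      · right
        constructor <;>
          (apply Fin.ext;
           simp only [GaussDiagram.smooth, GaussDiagram.flatten, GaussDiagram.flipSet,
             hxS, hkS, if_true, if_false, ite_true, ite_false])
        · exact (key _ dh1 dh2).symm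
        · exact (key _ df1 df2).symm
      · left
        constructor <;>
          (apply Fin.ext;
           simp only [GaussDiagram.smooth, GaussDiagram.flatten, GaussDiagram.flipSet,
             hxS, hkS, if_true, if_false, ite_true, ite_false])
        · exact (key _ dh1 dh2).symm
        · exact (key _ df1 df2).symm
  · -- x not flipped: identity map
    refine ⟨fun j => j, fun q => q, Function.bijective_id, Function.bijective_id,
      Or.inl fun a b p => rfl, ?_⟩
    intro j
    by_cases hj : skipAt x j ∈ S
    · right
      constructor <;>
        (apply Fin.ext;
         simp [GaussDiagram.smooth, GaussDiagram.flatten, GaussDiagram.flipSet, hxS, hj])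
    · left
      constructor <;>
        (apply Fin.ext;
         simp [GaussDiagram.smooth, GaussDiagram.flatten, GaussDiagram.flipSet, hxS, hj])

lemma Sone_flipSet {G : GaussDiagram} (hG : G.Proper) (S : Finset (Fin G.n)) (i : ℤ) :
    Sone (G.flipSet S) i = ∑ x : Fin G.n, if |G.parity x| = i then
        Finsupp.single (Fclass (G.smooth x).flatten)
          (if x ∈ S then -G.sign x else G.sign x) else 0 := by
  unfold Sone
  refine Finset.sum_congr rfl fun (x : Fin G.n) _ => ?_
  rw [parity_flipSet hG S x, flat_flip hG S x]
  have habs : |(if x ∈ S then (-1 : ℤ) else 1) * G.parity x| = |G.parity x| := by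
    split_ifs <;> simp
  rw [habs]
  rfl

/-- `S_i` is a degree one Vassiliev invariant: for every Gauss diagram
`G` and distinct chords `a, b`, the alternating sum of `S_i` over the four resolutions
(flipping `a` and/or `b`, where flipping interchanges head and foot and negates the sign)
vanishes in the free ℤ-module on flat equivalence classes of flat Gauss diagrams. -/
theorem Sone_degree_one (i : ℤ) (hi : 1 ≤ i) (G : GaussDiagram) (hG : G.Proper)
    (a b : Fin G.n) (hab : a ≠ b) :
    Sone G i - Sone (G.flipSet {a}) i - Sone (G.flipSet {b}) i
      + Sone (G.flipSet {a, b}) i = 0 := by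

  rw [Sone_flipSet hG, Sone_flipSet hG, Sone_flipSet hG]
  unfold Sone
  rw [← Finset.sum_sub_distrib, ← Finset.sum_sub_distrib, ← Finset.sum_add_distrib]
  refine Finset.sum_eq_zero fun x _ => ?_
  by_cases hc : |G.parity x| = i
  · rw [if_pos hc, if_pos hc, if_pos hc, if_pos hc]
    by_cases hxa : x = a <;> by_cases hxb : x = b
    · exact absurd (hxa ▸ hxb) hab
    · subst hxa
      simp only [Finset.mem_singleton, Finset.mem_insert, if_pos, if_neg, hxb,
        ite_true, ite_false, if_true, if_false, eq_self_iff_true, true_or,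
        Finsupp.single_neg]
      abel
    · subst hxb
      simp only [Finset.mem_singleton, Finset.mem_insert, hxa,
        ite_true, ite_false, eq_self_iff_true, or_true, if_false, if_true,
        Finsupp.single_neg]
      abel
    · simp only [Finset.mem_singleton, Finset.mem_insert, hxa, hxb, or_self,
        ite_false, if_false, Finsupp.single_neg]
      abel
  · rw [if_neg hc, if_neg hc, if_neg hc, if_neg hc]
    simp
end

section
/- Let Z = (z_1, …, z_n) with 0 < z_1 < … < z_n. The invariant S_Z is a degree n Vassiliev invariant: for every Gauss diagram G, every m ≥ n + 1, and every choice of m distinct chords x_1, …, x_m of G, Σ_{ε ∈ {±1}^m} (ε_1 ε_2 ⋯ ε_m) · S_Z(G_{(ε, x̄)}) = 0 in the free ℤ-module on flat equivalence classes of flat Gauss diagrams, where G_{(ε, x̄)} is obtained from G by flipping (interchanging head and foot and negating the sign of) each chord x_i with ε_i = −1. -/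
/-! ## Auxiliary lemmas -/

section Aux

lemma gd_ext {A B : GaussDiagram} (hn : A.n = B.n)
    (hh : ∀ i : Fin A.n, ((A.head i : ℕ)) = ((B.head (Fin.cast hn i) : ℕ)))
    (hf : ∀ i : Fin A.n, ((A.foot i : ℕ)) = ((B.foot (Fin.cast hn i) : ℕ)))
    (hs : ∀ i : Fin A.n, A.sign i = B.sign (Fin.cast hn i)) : A = B := by
  obtain ⟨na, ha, fa, sa⟩ := A
  obtain ⟨nb, hb, fb, sb⟩ := B
  dsimp at hn
  subst hn
  dsimp [Fin.cast] at hh hf hs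
  congr 1 <;> funext i
  · exact Fin.ext (by simpa using hh i)
  · exact Fin.ext (by simpa using hf i)
  · simpa using hs i

lemma skipAt_injective {n : ℕ} (x : Fin n) : Function.Injective (skipAt x) := by
  intro a b hab
  unfold skipAt at hab
  apply Fin.ext
  by_cases h1 : a.1 < x.1 <;> by_cases h2 : b.1 < x.1 <;>
    simp only [h1, h2, dif_pos, dif_neg, not_lt, Fin.mk.injEq, dite_true, dite_false] at hab <;>
    omega

lemma exists_skipAt {n : ℕ} {x c : Fin n} (h : c ≠ x) : ∃ c' : Fin (n - 1), skipAt x c' = c := by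
  have hne : c.1 ≠ x.1 := fun hv => h (Fin.ext hv)
  rcases lt_or_gt_of_ne hne with h1 | h1
  · refine ⟨⟨c.1, by have := x.2; omega⟩, ?_⟩
    unfold skipAt
    rw [dif_pos h1]
  · refine ⟨⟨c.1 - 1, by have := c.2; omega⟩, ?_⟩
    unfold skipAt
    rw [dif_neg (by simp only [not_lt]; omega)]
    exact Fin.ext (by simp only; omega)

lemma skipAt_unskip? {n : ℕ} {x b : Fin n} {b' : Fin (n - 1)} (h : unskip? x b = some b') :
    skipAt x b' = b := by
  unfold unskip? at h
  unfold skipAt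
  by_cases h1 : b.1 < x.1
  · rw [dif_pos h1] at h
    obtain rfl := Option.some.inj h
    rw [dif_pos h1]
  · rw [dif_neg h1] at h
    by_cases h2 : x.1 < b.1
    · rw [dif_pos h2] at h
      obtain rfl := Option.some.inj h
      rw [dif_neg (by simp only [not_lt]; omega)]
      exact Fin.ext (by simp only; omega)
    · rw [dif_neg h2] at h
      exact absurd h (by simp)

lemma flipSet_insert (G : GaussDiagram) (S : Finset (Fin G.n)) (c : Fin G.n) (hc : c ∉ S) :
    G.flipSet (insert c S) = (G.flipSet S).flipSet {c} := by
  show G.flipSet (insert c S) = (G.flipSet S).flipSet ({c} : Finset (Fin G.n))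
  refine gd_ext rfl ?_ ?_ ?_ <;> intro (i : Fin G.n) <;>
    simp only [GaussDiagram.flipSet, Fin.cast, Finset.mem_insert, Finset.mem_singleton] <;>
    by_cases h1 : i = c <;> by_cases h2 : i ∈ S <;>
    simp_all

lemma parity_flip (H : GaussDiagram) (c c' : Fin H.n) (h : c' ≠ c) :
    (H.flipSet {c}).parity c' = H.parity c' := by
  have key : ∀ y : Fin H.n,
      (if (H.flipSet {c}).crosses c' y then (H.flipSet {c}).sign y * (H.flipSet {c}).inter c' y
        else 0) = (if H.crosses c' y then H.sign y * H.inter c' y else 0) := by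
    intro y
    by_cases hy : y = c
    · subst hy
      simp only [GaussDiagram.crosses, GaussDiagram.inter, GaussDiagram.flipSet,
        Finset.mem_singleton, if_pos rfl, if_true, if_neg h, bne_iff_ne, ne_eq]
      rcases Bool.eq_false_or_eq_true (arc (H.head c').1 (H.foot c').1 (H.head y).1) with hb1 | hb1 <;>
        rcases Bool.eq_false_or_eq_true (arc (H.head c').1 (H.foot c').1 (H.foot y).1) with hb2 | hb2 <;>
        simp [hb1, hb2, Ne.symm h] <;> ring <;>
          exact fun hh => absurd (hh.symm.trans ((bne_iff_ne (α := Fin (H.flipSet {y}).n) (a := y) (b := c')).mpr (Ne.symm h))) Bool.false_ne_true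
    · simp only [GaussDiagram.crosses, GaussDiagram.inter, GaussDiagram.flipSet,
        Finset.mem_singleton, if_neg h, if_neg hy]
      rfl
  exact Finset.sum_congr rfl (fun y _ => key y)

lemma flip_smooth (H : GaussDiagram) (x c : Fin H.n) (c' : Fin (H.n - 1))
    (hxc : x ≠ c) (hc' : skipAt x c' = c) :
    (H.flipSet {c}).smooth x = (H.smooth x).flipSet {c'} := by
  have hmem : ∀ i : Fin (H.n - 1), skipAt x i = c ↔ i = c' :=
    fun i => ⟨fun hh => skipAt_injective x (hh.trans hc'.symm), fun hh => hh ▸ hc'⟩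
  refine gd_ext rfl ?_ ?_ ?_ <;> intro i <;>
    simp only [GaussDiagram.smooth, GaussDiagram.flipSet, Fin.cast] <;>
    split_ifs <;>
    first
      | rfl
      | exact absurd (Finset.mem_singleton.mp
          (by assumption : x ∈ ({c} : Finset (Fin H.n)))) hxc
      | exact absurd
          (Finset.mem_singleton.mpr ((hmem i).mp (Finset.mem_singleton.mp
            (by assumption : skipAt x i ∈ ({c} : Finset (Fin H.n))))))
          (by assumption : (i ∈ ({c'} : Finset (Fin (H.n - 1)))) → False)
      | exact absurd
          (Finset.mem_singleton.mpr ((hmem i).mpr (Finset.mem_singleton.mp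
            (by assumption : i ∈ ({c'} : Finset (Fin (H.n - 1)))))))
          (by assumption : (skipAt x i ∈ ({c} : Finset (Fin H.n))) → False)

lemma Fclass_flip (H : GaussDiagram) (c : Fin H.n) :
    Fclass (H.flipSet {c}).flatten = Fclass H.flatten := by
  apply Quot.sound
  refine Or.inl ⟨id, id, Function.bijective_id, Function.bijective_id,
    Or.inl (fun _ _ _ => rfl), ?_⟩
  intro i
  by_cases h : i = c
  · refine Or.inr ⟨?_, ?_⟩ <;>
      simp [GaussDiagram.flatten, GaussDiagram.flipSet, FlatDiagram.hasEnds, h]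
  · refine Or.inl ⟨?_, ?_⟩ <;>
      simp [GaussDiagram.flatten, GaussDiagram.flipSet, FlatDiagram.hasEnds, h] <;>
      exact (if_neg (fun hh => h (Finset.mem_singleton.mp hh))).symm

lemma smoothList_congr {A B : GaussDiagram} (h : A = B) (L : List (Fin A.n))
    (L' : List (Fin B.n)) (hL : HEq L L') : A.smoothList L = B.smoothList L' := by
  subst h
  exact congrArg _ (eq_of_heq hL)

lemma parity_congr {A B : GaussDiagram} (h : A = B) (a : Fin A.n) (b : Fin B.n)
    (hab : HEq a b) : A.parity a = B.parity b := by
  subst h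
  rw [eq_of_heq hab]

lemma sign_congr {A B : GaussDiagram} (h : A = B) (a : Fin A.n) (b : Fin B.n)
    (hab : HEq a b) : A.sign a = B.sign b := by
  subst h
  rw [eq_of_heq hab]

lemma smoothList_flip : ∀ (k : ℕ) (H : GaussDiagram) (c : Fin H.n) (L : List (Fin H.n)),
    L.length ≤ k → (∀ a ∈ L, a ≠ c) →
    Fclass ((H.flipSet {c}).smoothList L).flatten = Fclass (H.smoothList L).flatten := by
  intro k
  induction k with
  | zero =>
    intro H c L hL _
    obtain rfl : L = [] := List.length_eq_zero_iff.mp (Nat.le_zero.mp hL)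
    erw [GaussDiagram.smoothList.eq_1 (H.flipSet {c}), GaussDiagram.smoothList.eq_1]
    exact Fclass_flip H c
  | succ k ih =>
    intro H c L hL hmem
    match L with
    | [] =>
      erw [GaussDiagram.smoothList.eq_1 (H.flipSet {c}), GaussDiagram.smoothList.eq_1]
      exact Fclass_flip H c
    | a :: xs =>
      have hac : a ≠ c := hmem a List.mem_cons_self
      obtain ⟨c', hc'⟩ := exists_skipAt (Ne.symm hac)
      erw [GaussDiagram.smoothList.eq_2 (H.flipSet {c}), GaussDiagram.smoothList.eq_2]
      rw [smoothList_congr (flip_smooth H a c c' hac hc') _ _ HEq.rfl]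
      refine ih (H.smooth a) c' (xs.filterMap (unskip? a)) ?_ ?_
      · exact le_trans (List.length_filterMap_le _ _)
          (Nat.le_of_succ_le_succ (by simpa using hL))
      · intro b' hb'
        obtain ⟨b, hb, hub⟩ := List.mem_filterMap.mp hb'
        intro hbc
        exact hmem b (List.mem_cons_of_mem a hb)
          (by rw [← skipAt_unskip? hub, hbc, hc'])

end Aux

set_option maxHeartbeats 2000000 in
/-- `S_Z` is a degree `n` Vassiliev invariant: for every Gauss diagram
`G`, every `m ≥ n + 1` and every choice of `m` distinct chords `x₁, …, x_m` of `G`, the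
alternating sum of `S_Z` over all `2^m` resolutions (each resolution flipping the chords
`x_j` with index in the flipping set `s`) vanishes in the free ℤ-module on flat
equivalence classes of flat Gauss diagrams. -/
theorem SZ_vassiliev {n : ℕ} (Z : Fin n → ℤ) (hpos : ∀ j, 0 < Z j) (hmono : StrictMono Z)
    (G : GaussDiagram) (hG : G.Proper) (m : ℕ) (hm : n + 1 ≤ m)
    (x : Fin m → Fin G.n) (hx : Function.Injective x) :
    ∑ s : Finset (Fin m), (-1 : ℤ) ^ s.card • SZ (G.flipSet (s.image x)) Z = 0 := by
  classical
  have hSZ : ∀ S : Finset (Fin G.n), SZ (G.flipSet S) Z =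
      ∑ t : Fin n → Fin G.n,
        if ∀ j, |(G.flipSet S).parity (t j)| = Z j then
          Finsupp.single (Fclass ((G.flipSet S).smoothList (List.ofFn t)).flatten)
            (∏ j, (G.flipSet S).sign (t j))
        else 0 := fun S => rfl
  simp only [hSZ, Finset.smul_sum]
  rw [Finset.sum_comm]
  refine Finset.sum_eq_zero ?_
  intro t _
  obtain ⟨i, hi⟩ : ∃ i : Fin m, ∀ j, x i ≠ t j := by
    by_contra hcon
    push_neg at hcon
    have hsub : (Finset.univ.image x) ⊆ Finset.univ.image t := by
      intro a ha
      rw [Finset.mem_image] at ha ⊢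
      obtain ⟨iw, _, rfl⟩ := ha
      obtain ⟨j, hj⟩ := hcon iw
      exact ⟨j, Finset.mem_univ j, hj.symm⟩
    have h1 := Finset.card_le_card hsub
    rw [Finset.card_image_of_injective _ hx, Finset.card_univ, Fintype.card_fin] at h1
    have h2 : (Finset.univ.image t).card ≤ n := by
      have := Finset.card_image_le (s := (Finset.univ : Finset (Fin n))) (f := t)
      simpa using this
    omega
  have key : ∀ s : Finset (Fin m), i ∉ s →
      ((-1 : ℤ) ^ (insert i s).card •
        (if ∀ j, |(G.flipSet ((insert i s).image x)).parity (t j)| = Z j then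
          Finsupp.single
            (Fclass ((G.flipSet ((insert i s).image x)).smoothList (List.ofFn t)).flatten)
            (∏ j, (G.flipSet ((insert i s).image x)).sign (t j))
        else 0)) =
      -((-1 : ℤ) ^ s.card •
        (if ∀ j, |(G.flipSet (s.image x)).parity (t j)| = Z j then
          Finsupp.single
            (Fclass ((G.flipSet (s.image x)).smoothList (List.ofFn t)).flatten)
            (∏ j, (G.flipSet (s.image x)).sign (t j))
        else 0)) := by
    intro s his
    have htc : ∀ j, t j ≠ x i := fun j hh => hi j hh.symm
    have hcS : x i ∉ s.image x := by
      rw [Finset.mem_image]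
      rintro ⟨j, hj, hji⟩
      exact his (by rwa [hx hji] at hj)
    have hD : G.flipSet ((insert i s).image x) = (G.flipSet (s.image x)).flipSet {x i} := by
      rw [Finset.image_insert]
      exact flipSet_insert G _ _ hcS
    have hpar2 : ∀ j, (G.flipSet ((insert i s).image x)).parity (t j)
        = (G.flipSet (s.image x)).parity (t j) :=
      fun j => (parity_congr hD (t j) (t j) HEq.rfl).trans
        (parity_flip (G.flipSet (s.image x)) (x i) (t j) (htc j))
    have hsgn2 : ∀ j, (G.flipSet ((insert i s).image x)).sign (t j)
        = (G.flipSet (s.image x)).sign (t j) := by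
      intro j
      refine (sign_congr hD (t j) (t j) HEq.rfl).trans ?_
      have hunf : ((G.flipSet (s.image x)).flipSet {x i}).sign (t j) =
          if t j ∈ ({x i} : Finset (Fin G.n)) then -((G.flipSet (s.image x)).sign (t j))
          else (G.flipSet (s.image x)).sign (t j) := rfl
      rw [hunf, if_neg (by simpa using htc j)]
    have hcls2 : Fclass ((G.flipSet ((insert i s).image x)).smoothList (List.ofFn t)).flatten
        = Fclass ((G.flipSet (s.image x)).smoothList (List.ofFn t)).flatten := by
      rw [smoothList_congr hD (List.ofFn t) (List.ofFn t) HEq.rfl]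
      refine smoothList_flip (List.ofFn t).length _ _ _ le_rfl ?_
      intro a ha
      obtain ⟨j, rfl⟩ := List.mem_ofFn.mp ha
      exact htc j
    simp only [hpar2, hsgn2, hcls2, Finset.card_insert_of_notMem his, pow_succ,
      mul_neg_one, neg_smul]
  refine Finset.sum_ninvolution (fun s => if i ∈ s then s.erase i else insert i s) ?_ ?_ ?_ ?_
  · intro a
    by_cases hia : i ∈ a
    · rw [if_pos hia]
      have h1 : i ∉ a.erase i := Finset.notMem_erase i a
      have h2 := key (a.erase i) h1
      rw [Finset.insert_erase hia] at h2
      rw [h2]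
      exact neg_add_cancel _
    · rw [if_neg hia, key a hia]
      exact add_neg_cancel _
  · intro a _
    by_cases hia : i ∈ a
    · rw [if_pos hia]
      exact fun hh => (Finset.erase_ne_self.mpr hia) hh
    · rw [if_neg hia]
      exact fun hh => (Finset.insert_ne_self.mpr hia) hh
  · intro a
    exact Finset.mem_univ _
  · intro a
    by_cases hia : i ∈ a
    · rw [if_pos hia, if_neg (Finset.notMem_erase i a), Finset.insert_erase hia]
    · rw [if_neg hia, if_pos (Finset.mem_insert_self i a), Finset.erase_insert hia]
end
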